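/- Let Γ be a rooted digraph satisfying P0, P1, P2, P3 with out-valency m = p·q a product of primes p < q, suppose Γ is not a tree and δ_{N−1} is trivial. Then there is a system {ω_1, …, ω_p} of blocks for Aut(Γ) in Γ^1(α) with exactly p blocks, each of size q, and with pairwise disjoint descendant sets; moreover r_i = 1 for i ≤ N−1 and r_i = p for i ≥ N. -/

import Mathlib

variable {V : Type*}

/-- Directed walks of length `n` (`n`-arcs). -/
def arcOf (E : V → V → Prop) : ℕ → V → V → Prop
  | 0 => fun x y => x = y
  | n + 1 => fun x y => ∃ z, E x z ∧ arcOf E n z y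

/-- Vertices reachable from `x` by a directed path of length exactly `n`. -/
def descN (E : V → V → Prop) (n : ℕ) (x : V) : Set V := {y | arcOf E n x y}

/-- The descendant set of `x` (including `x` itself). -/
def desc (E : V → V → Prop) (x : V) : Set V := {y | ∃ n, arcOf E n x y}

theorem self_mem_desc (E : V → V → Prop) (x : V) : x ∈ desc E x := ⟨0, by simp [arcOf]⟩

def descSet (E : V → V → Prop) (S : Set V) : Set V := ⋃ x ∈ S, desc E x

theorem self_mem_descSet (E : V → V → Prop) {S : Set V} {x : V} (hx : x ∈ S) :
    x ∈ descSet E S := Set.mem_biUnion hx (self_mem_desc E x)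

def outSet (E : V → V → Prop) (x : V) : Set V := {y | E x y}

def inSet (E : V → V → Prop) (x : V) : Set V := {y | E y x}

def IsAut (E : V → V → Prop) (g : Equiv.Perm V) : Prop := ∀ x y, E x y ↔ E (g x) (g y)

def Rooted (E : V → V → Prop) (α : V) : Prop := ∀ y, y ∈ desc E α

def P0 (E : V → V → Prop) (α : V) (m : ℕ) : Prop :=
  0 < m ∧ (∀ x, (outSet E x).Finite ∧ (outSet E x).ncard = m) ∧
    ∀ s t : ℕ, s ≠ t → Disjoint (descN E s α) (descN E t α)

def P1 (E : V → V → Prop) : Prop :=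
  ∀ u : V, ∃ f : desc E u ≃ V, ∀ x y : desc E u, (E x.1 y.1 ↔ E (f x) (f y))

def P2 (E : V → V → Prop) (α : V) : Prop :=
  ∀ i : ℕ, ∀ x ∈ descN E i α, ∀ y ∈ descN E i α,
    ∃ g : Equiv.Perm V, IsAut E g ∧ g α = α ∧ g x = y

def P3 (E : V → V → Prop) (α : V) : Prop :=
  ∀ i : ℕ, (descN E i α).ncard < (descN E (i + 1) α).ncard

def EdgeTrans (E : V → V → Prop) : Prop :=
  ∀ a b c d : V, E a b → E c d → ∃ g : Equiv.Perm V, IsAut E g ∧ g a = c ∧ g b = d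

def VertexTrans (E : V → V → Prop) : Prop :=
  ∀ u v : V, ∃ g : Equiv.Perm V, IsAut E g ∧ g u = v

def NoDirectedCycles (E : V → V → Prop) : Prop :=
  ∀ s : ℕ, 1 ≤ s → ∀ x : V, ¬ arcOf E s x x

def HasPropZ {W : Type*} (E : W → W → Prop) : Prop :=
  ∃ f : W → ℤ, Function.Surjective f ∧ ∀ x y : W, E x y → f y = f x + 1

def deltaSetoid (E : V → V → Prop) (n : ℕ) : Setoid V :=
  ⟨fun u v => descN E n u = descN E n v, ⟨fun _ => rfl, Eq.symm, Eq.trans⟩⟩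

def QEdge (E : V → V → Prop) (n : ℕ)
    (A B : Quotient (deltaSetoid E n)) : Prop :=
  ∃ a b : V, Quotient.mk (deltaSetoid E n) a = A ∧ Quotient.mk (deltaSetoid E n) b = B ∧ E a b

def cls (E : V → V → Prop) (n : ℕ) (v : V) : Set V := {u | descN E n u = descN E n v}

def QEdgeSet (E : V → V → Prop) (A B : Set V) : Prop := ∃ a ∈ A, ∃ b ∈ B, E a b

def WDH (E : V → V → Prop) : Prop :=
  VertexTrans E ∧
  ∀ (X Y : Finset V) (f : descSet E (↑X : Set V) ≃ descSet E (↑Y : Set V)),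
    (∀ a b : descSet E (↑X : Set V), (E a.1 b.1 ↔ E (f a).1 (f b).1)) →
    ∃ g : Equiv.Perm V, IsAut E g ∧
      ∀ (x : V) (hx : x ∈ X), g x = (f ⟨x, self_mem_descSet E (by exact_mod_cast hx)⟩).1

def EdgeT (E : V → V → Prop) := {p : V × V // E p.1 p.2}

def reachSetoid (E : V → V → Prop) : Setoid (EdgeT E) :=
  ⟨Relation.EqvGen (fun a b => a.1.1 = b.1.1 ∨ a.1.2 = b.1.2),
    Relation.EqvGen.is_equivalence _⟩

def AlSources (E : V → V → Prop) (A : Quotient (reachSetoid E)) : Set V :=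
  {v | ∃ e : EdgeT E, Quotient.mk (reachSetoid E) e = A ∧ v = e.1.1}

def AlSinks (E : V → V → Prop) (A : Quotient (reachSetoid E)) : Set V :=
  {v | ∃ e : EdgeT E, Quotient.mk (reachSetoid E) e = A ∧ v = e.1.2}

def AlEdge (E : V → V → Prop) (A B : Quotient (reachSetoid E)) : Prop :=
  ∃ v, v ∈ AlSinks E A ∧ v ∈ AlSources E B


namespace PQ

variable {V : Type*} {E : V → V → Prop} {α : V} {m : ℕ}

theorem arcOf_zero {x y : V} : arcOf E 0 x y ↔ x = y := Iff.rfl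

theorem arcOf_succ {n : ℕ} {x y : V} :
    arcOf E (n+1) x y ↔ ∃ z, E x z ∧ arcOf E n z y := Iff.rfl

theorem arcOf_append {a b : ℕ} {x y z : V} (h1 : arcOf E a x y) (h2 : arcOf E b y z) :
    arcOf E (a+b) x z := by
  induction a generalizing x with
  | zero => rw [arcOf_zero] at h1; subst h1; rw [Nat.zero_add]; exact h2
  | succ n ih =>
    rw [Nat.succ_add]
    obtain ⟨w, hw, harc⟩ := h1
    exact ⟨w, hw, ih harc⟩

theorem arcOf_split {a b : ℕ} {x z : V} (h : arcOf E (a+b) x z) :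
    ∃ y, arcOf E a x y ∧ arcOf E b y z := by
  induction a generalizing x with
  | zero => rw [Nat.zero_add] at h; exact ⟨x, rfl, h⟩
  | succ n ih =>
    rw [Nat.succ_add] at h
    obtain ⟨w, hw, harc⟩ := h
    obtain ⟨y, h1, h2⟩ := ih harc
    exact ⟨y, ⟨w, hw, h1⟩, h2⟩

theorem arcOf_one {x y : V} : arcOf E 1 x y ↔ E x y := by
  constructor
  · rintro ⟨z, hz, (rfl : z = y)⟩; exact hz
  · intro h; exact ⟨y, h, rfl⟩

theorem arcOf_succ_last {n : ℕ} {x y : V} :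
    arcOf E (n+1) x y ↔ ∃ z, arcOf E n x z ∧ E z y := by
  constructor
  · intro h
    obtain ⟨z, h1, h2⟩ := arcOf_split (a := n) (b := 1) h
    exact ⟨z, h1, arcOf_one.1 h2⟩
  · rintro ⟨z, h1, h2⟩
    exact arcOf_append h1 (arcOf_one.2 h2)

theorem desc_trans {x y z : V} (h1 : y ∈ desc E x) (h2 : z ∈ desc E y) : z ∈ desc E x := by
  obtain ⟨a, ha⟩ := h1; obtain ⟨b, hb⟩ := h2; exact ⟨a+b, arcOf_append ha hb⟩

theorem mem_desc_of_arc {n : ℕ} {x y : V} (h : arcOf E n x y) : y ∈ desc E x := ⟨n, h⟩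

theorem desc_out_closed {u x y : V} (hx : x ∈ desc E u) (hxy : E x y) : y ∈ desc E u :=
  desc_trans hx ⟨1, arcOf_one.2 hxy⟩

/-- membership in levels -/
theorem mem_descN {n : ℕ} {x y : V} : y ∈ descN E n x ↔ arcOf E n x y := Iff.rfl

theorem descN_zero (x : V) : descN E 0 x = {x} := by
  ext y; simp [descN, arcOf, eq_comm]

section Levels

variable (h0 : P0 E α m) (hroot : Rooted E α)

theorem level_unique (h0 : P0 E α m) {s t : ℕ} {x : V}
    (hs : x ∈ descN E s α) (ht : x ∈ descN E t α) : s = t := by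
  by_contra hne
  exact (h0.2.2 s t hne).ne_of_mem hs ht rfl

/-- every vertex is in some level -/
theorem exists_level (hroot : Rooted E α) (x : V) : ∃ n, x ∈ descN E n α := hroot x

theorem arc_level {s k : ℕ} {x y : V} (hx : x ∈ descN E s α) (h : arcOf E k x y) :
    y ∈ descN E (s+k) α := arcOf_append hx h

theorem edge_level {s : ℕ} {x y : V} (hx : x ∈ descN E s α) (h : E x y) :
    y ∈ descN E (s+1) α := arc_level hx (arcOf_one.2 h)

theorem edge_level_rev (h0 : P0 E α m) (hroot : Rooted E α) {s : ℕ} {x y : V}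
    (hy : y ∈ descN E (s+1) α) (h : E x y) : x ∈ descN E s α := by
  obtain ⟨k, hk⟩ := hroot x
  have := edge_level hk h
  have hks : k + 1 = s + 1 := level_unique h0 this hy
  have hks' : k = s := by omega
  subst hks'; exact hk

theorem no_cycle (h0 : P0 E α m) (hroot : Rooted E α) {k : ℕ} {x : V}
    (h : arcOf E k x x) : k = 0 := by
  obtain ⟨s, hs⟩ := hroot x
  have h2 := arc_level hs h
  have := level_unique h0 hs h2
  omega

theorem inSet_subset_level (h0 : P0 E α m) (hroot : Rooted E α) {s : ℕ} {y : V}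
    (hy : y ∈ descN E (s+1) α) : inSet E y ⊆ descN E s α := fun x hx =>
  edge_level_rev h0 hroot hy hx

theorem descN_succ_eq_biUnion {n : ℕ} :
    descN E (n+1) α = ⋃ x ∈ descN E n α, outSet E x := by
  ext y
  simp only [Set.mem_iUnion, mem_descN, outSet, Set.mem_setOf_eq]
  rw [arcOf_succ_last]
  constructor
  · rintro ⟨z, h1, h2⟩; exact ⟨z, h1, h2⟩
  · rintro ⟨z, h1, h2⟩; exact ⟨z, h1, h2⟩

end Levels

end PQ
namespace PQ

variable {V : Type*} {E : V → V → Prop} {α : V} {m : ℕ}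

theorem level_finite (h0 : P0 E α m) (n : ℕ) : (descN E n α).Finite := by
  induction n with
  | zero => rw [descN_zero]; exact Set.finite_singleton α
  | succ n ih =>
    rw [descN_succ_eq_biUnion]
    exact Set.Finite.biUnion ih (fun x _ => (h0.2.1 x).1)

theorem outSet_nonempty (h0 : P0 E α m) (x : V) : (outSet E x).Nonempty := by
  apply Set.nonempty_of_ncard_ne_zero
  rw [(h0.2.1 x).2]
  have := h0.1
  omega

theorem level_nonempty (h0 : P0 E α m) (n : ℕ) : (descN E n α).Nonempty := by
  induction n with
  | zero => rw [descN_zero]; exact ⟨α, rfl⟩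
  | succ n ih =>
    obtain ⟨x, hx⟩ := ih
    obtain ⟨y, hy⟩ := outSet_nonempty h0 x
    exact ⟨y, edge_level hx hy⟩

theorem level_ncard_pos (h0 : P0 E α m) (n : ℕ) : 0 < (descN E n α).ncard :=
  (Set.ncard_pos (level_finite h0 n)).2 (level_nonempty h0 n)

theorem has_parent {n : ℕ} {y : V} (hy : y ∈ descN E (n+1) α) :
    ∃ x ∈ descN E n α, E x y := by
  obtain ⟨x, h1, h2⟩ := arcOf_succ_last.1 hy
  exact ⟨x, h1, h2⟩

theorem inSet_finite (h0 : P0 E α m) (hroot : Rooted E α) {n : ℕ} {y : V}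
    (hy : y ∈ descN E (n+1) α) : (inSet E y).Finite :=
  (level_finite h0 n).subset (inSet_subset_level h0 hroot hy)

section Counting

variable {r : ℕ → ℕ} {N : ℕ}

theorem r_pos (h0 : P0 E α m) (hroot : Rooted E α)
    (hr : ∀ i : ℕ, 1 ≤ i → ∀ x ∈ descN E i α, (inSet E x).ncard = r i)
    {i : ℕ} (hi : 1 ≤ i) : 1 ≤ r i := by
  obtain ⟨k, rfl⟩ : ∃ k, i = k + 1 := ⟨i - 1, by omega⟩
  obtain ⟨y, hy⟩ := level_nonempty h0 (k+1)
  rw [← hr (k+1) hi y hy]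
  obtain ⟨x, hx, hxy⟩ := has_parent hy
  exact (Set.ncard_pos (inSet_finite h0 hroot hy)).2 ⟨x, hxy⟩

theorem ncard_eq_finite_toFinset_card {s : Set V} (hs : s.Finite) :
    s.ncard = hs.toFinset.card := Set.ncard_eq_toFinset_card _ hs

/-- the fundamental counting identity: `d_{n+1} * r_{n+1} = d_n * m`. -/
theorem level_count (h0 : P0 E α m) (hroot : Rooted E α)
    (hr : ∀ i : ℕ, 1 ≤ i → ∀ x ∈ descN E i α, (inSet E x).ncard = r i)
    (n : ℕ) :
    (descN E (n+1) α).ncard * r (n+1) = (descN E n α).ncard * m := by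
  classical
  have hA := level_finite h0 n
  have hB := level_finite h0 (n+1)
  set A := hA.toFinset with hAdef
  set B := hB.toFinset with hBdef
  have key : ∑ x ∈ A, (B.filter (fun y => E x y)).card
      = ∑ y ∈ B, (A.filter (fun x => E x y)).card := by
    simp_rw [Finset.card_filter]
    exact Finset.sum_comm
  have hrow : ∀ x ∈ A, (B.filter (fun y => E x y)).card = m := by
    intro x hx
    have hx' : x ∈ descN E n α := by rwa [hAdef, Set.Finite.mem_toFinset] at hx
    have : B.filter (fun y => E x y) = (h0.2.1 x).1.toFinset := by
      ext y
      simp only [Finset.mem_filter, hBdef, Set.Finite.mem_toFinset]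
      constructor
      · rintro ⟨_, h⟩; exact h
      · intro h; exact ⟨edge_level hx' h, h⟩
    rw [this, ← ncard_eq_finite_toFinset_card]
    exact (h0.2.1 x).2
  have hcol : ∀ y ∈ B, (A.filter (fun x => E x y)).card = r (n+1) := by
    intro y hy
    have hy' : y ∈ descN E (n+1) α := by rwa [hBdef, Set.Finite.mem_toFinset] at hy
    have hfin := inSet_finite h0 hroot hy'
    have : A.filter (fun x => E x y) = hfin.toFinset := by
      ext x
      simp only [Finset.mem_filter, hAdef, Set.Finite.mem_toFinset]
      constructor
      · rintro ⟨_, h⟩; exact h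
      · intro h; exact ⟨edge_level_rev h0 hroot hy' h, h⟩
    rw [this, ← ncard_eq_finite_toFinset_card]
    exact hr (n+1) (by omega) y hy'
  rw [Finset.sum_congr rfl hrow, Finset.sum_congr rfl hcol] at key
  simp only [Finset.sum_const, smul_eq_mul] at key
  rw [ncard_eq_finite_toFinset_card hA, ncard_eq_finite_toFinset_card hB, ← hAdef, ← hBdef]
  exact key.symm

theorem r_lt_m (h0 : P0 E α m) (hroot : Rooted E α) (h3 : P3 E α)
    (hr : ∀ i : ℕ, 1 ≤ i → ∀ x ∈ descN E i α, (inSet E x).ncard = r i)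
    {i : ℕ} (hi : 1 ≤ i) : r i < m := by
  obtain ⟨k, rfl⟩ : ∃ k, i = k + 1 := ⟨i - 1, by omega⟩
  have hc := level_count h0 hroot hr k
  have h3' := h3 k
  by_contra hge
  push_neg at hge
  have : (descN E (k+1) α).ncard * m ≤ (descN E (k+1) α).ncard * r (k+1) :=
    Nat.mul_le_mul_left _ hge
  rw [hc] at this
  have hm : 0 < m := h0.1
  nlinarith [level_ncard_pos h0 k, level_ncard_pos h0 (k+1)]

/-- `d_n * ∏_{i=1}^n r_i = m ^ n` -/
theorem level_prod (h0 : P0 E α m) (hroot : Rooted E α)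
    (hr : ∀ i : ℕ, 1 ≤ i → ∀ x ∈ descN E i α, (inSet E x).ncard = r i)
    (n : ℕ) :
    (descN E n α).ncard * (∏ i ∈ Finset.Icc 1 n, r i) = m ^ n := by
  induction n with
  | zero => simp [descN_zero]
  | succ n ih =>
    rw [Finset.prod_Icc_succ_top (by omega : 1 ≤ n + 1)]
    calc (descN E (n+1) α).ncard * ((∏ i ∈ Finset.Icc 1 n, r i) * r (n+1))
        = ((descN E (n+1) α).ncard * r (n+1)) * (∏ i ∈ Finset.Icc 1 n, r i) := by ring
      _ = ((descN E n α).ncard * m) * (∏ i ∈ Finset.Icc 1 n, r i) := by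
          rw [level_count h0 hroot hr n]
      _ = ((descN E n α).ncard * (∏ i ∈ Finset.Icc 1 n, r i)) * m := by ring
      _ = m ^ n * m := by rw [ih]
      _ = m ^ (n+1) := by ring

end Counting

end PQ
namespace PQ

variable {V : Type*} {E : V → V → Prop} {α : V} {m : ℕ}

theorem aut_arcOf {g : Equiv.Perm V} (hg : IsAut E g) :
    ∀ {n : ℕ} {x y : V}, arcOf E n x y ↔ arcOf E n (g x) (g y) := by
  intro n
  induction n with
  | zero =>
    intro x y
    simp only [arcOf_zero]
    exact ⟨fun h => by rw [h], fun h => g.injective h⟩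
  | succ n ih =>
    intro x y
    constructor
    · rintro ⟨z, hz, harc⟩
      exact ⟨g z, (hg x z).1 hz, ih.1 harc⟩
    · rintro ⟨w, hw, harc⟩
      refine ⟨g.symm w, ?_, ?_⟩
      · have := (hg x (g.symm w)).2
        rw [g.apply_symm_apply] at this
        exact this hw
      · have := ih (x := g.symm w) (y := y)
        rw [g.apply_symm_apply] at this
        exact this.2 harc

theorem aut_mem_descN {g : Equiv.Perm V} (hg : IsAut E g) {n : ℕ} {x y : V} :
    y ∈ descN E n x ↔ g y ∈ descN E n (g x) := aut_arcOf hg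

theorem aut_mem_level {g : Equiv.Perm V} (hg : IsAut E g) (hgα : g α = α) {n : ℕ} {y : V} :
    y ∈ descN E n α ↔ g y ∈ descN E n α := by
  rw [aut_mem_descN hg (n := n) (x := α), hgα]

theorem aut_mem_desc {g : Equiv.Perm V} (hg : IsAut E g) {x y : V} :
    y ∈ desc E x ↔ g y ∈ desc E (g x) := by
  constructor
  · rintro ⟨n, hn⟩; exact ⟨n, (aut_arcOf hg).1 hn⟩
  · rintro ⟨n, hn⟩; exact ⟨n, (aut_arcOf hg).2 hn⟩

end PQ
namespace PQ

variable {V : Type*} {E : V → V → Prop} {α : V} {m : ℕ}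

theorem sub_arc_transport {u : V} (f : desc E u ≃ V)
    (hf : ∀ x y : desc E u, (E x.1 y.1 ↔ E (f x) (f y))) :
    ∀ {n : ℕ} (x y : desc E u), arcOf E n x.1 y.1 ↔ arcOf E n (f x) (f y) := by
  intro n
  induction n with
  | zero =>
    intro x y
    simp only [arcOf_zero]
    constructor
    · intro h; congr 1; exact Subtype.ext h
    · intro h
      have : x = y := f.injective h
      rw [this]
  | succ n ih =>
    intro x y
    constructor
    · rintro ⟨z, hz, harc⟩
      have hzu : z ∈ desc E u := desc_out_closed x.2 hz
      exact ⟨f ⟨z, hzu⟩, (hf x ⟨z, hzu⟩).1 hz, (ih ⟨z, hzu⟩ y).1 harc⟩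
    · rintro ⟨w, hw, harc⟩
      refine ⟨(f.symm w).1, ?_, ?_⟩
      · have := (hf x (f.symm w)).2
        rw [f.apply_symm_apply] at this
        exact this hw
      · have := (ih (f.symm w) y).2
        rw [f.apply_symm_apply] at this
        exact this harc

/-- from P1: a descendant-isomorphism sending `u` to the root `α`. -/
theorem exists_rootIso (h0 : P0 E α m) (hroot : Rooted E α) (h1 : P1 E) (u : V) :
    ∃ f : desc E u ≃ V, (∀ x y : desc E u, (E x.1 y.1 ↔ E (f x) (f y))) ∧
      f ⟨u, self_mem_desc E u⟩ = α := by
  obtain ⟨f, hf⟩ := h1 u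
  refine ⟨f, hf, ?_⟩
  set u0 : desc E u := ⟨u, self_mem_desc E u⟩
  set β := f u0 with hβ
  have hrootβ : ∀ w, ∃ n, arcOf E n β w := by
    intro w
    obtain ⟨n, hn⟩ := (f.symm w).2
    have := (sub_arc_transport f hf u0 (f.symm w)).1 hn
    rw [f.apply_symm_apply] at this
    exact ⟨n, this⟩
  obtain ⟨l, hl⟩ := hroot β
  obtain ⟨k, hk⟩ := hrootβ α
  have hcyc : arcOf E (l + k) α α := arcOf_append hl hk
  have hlk : l + k = 0 := no_cycle h0 hroot hcyc
  have hl0 : l = 0 := by omega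
  rw [hl0] at hl
  exact hl.symm

section RootIso

variable {u : V} {f : desc E u ≃ V}

theorem rootIso_level (hf : ∀ x y : desc E u, (E x.1 y.1 ↔ E (f x) (f y)))
    (hfu : f ⟨u, self_mem_desc E u⟩ = α) {n : ℕ} (x : desc E u) :
    x.1 ∈ descN E n u ↔ f x ∈ descN E n α := by
  have := sub_arc_transport f hf (n := n) ⟨u, self_mem_desc E u⟩ x
  rw [hfu] at this
  exact this

/-- the local levels `Γ^n(u)` have the same size as global levels -/
theorem rootIso_level_card (h0 : P0 E α m)
    (hf : ∀ x y : desc E u, (E x.1 y.1 ↔ E (f x) (f y)))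
    (hfu : f ⟨u, self_mem_desc E u⟩ = α) (n : ℕ) :
    (descN E n u).ncard = (descN E n α).ncard := by
  classical
  set F : V → V := fun x => if h : x ∈ desc E u then f ⟨x, h⟩ else x with hF
  have hmaps : ∀ x ∈ descN E n u, F x ∈ descN E n α := by
    intro x hx
    have hxu : x ∈ desc E u := ⟨n, hx⟩
    rw [hF]; simp only [dif_pos hxu]
    exact (rootIso_level hf hfu ⟨x, hxu⟩).1 hx
  have hinj : Set.InjOn F (descN E n u) := by
    intro x hx y hy hxy
    have hxu : x ∈ desc E u := ⟨n, hx⟩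
    have hyu : y ∈ desc E u := ⟨n, hy⟩
    rw [hF] at hxy; simp only [dif_pos hxu, dif_pos hyu] at hxy
    exact congrArg Subtype.val (f.injective hxy)
  have hsurj : ∀ w ∈ descN E n α, ∃ x ∈ descN E n u, F x = w := by
    intro w hw
    refine ⟨(f.symm w).1, ?_, ?_⟩
    · have := (rootIso_level hf hfu (n := n) (f.symm w)).2
      rw [f.apply_symm_apply] at this
      exact this hw
    · rw [hF]; simp only [dif_pos (f.symm w).2]
      have : (⟨(f.symm w).1, (f.symm w).2⟩ : desc E u) = f.symm w := rfl
      rw [this, f.apply_symm_apply]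
  have himg : F '' (descN E n u) = descN E n α := by
    apply Set.eq_of_subset_of_subset
    · rintro w ⟨x, hx, rfl⟩; exact hmaps x hx
    · intro w hw; obtain ⟨x, hx, hFx⟩ := hsurj w hw; exact ⟨x, hx, hFx⟩
  rw [← himg, Set.ncard_image_of_injOn hinj]

/-- in-valency within `desc u` at local level `k` equals `r k` -/
theorem rootIso_inval (h0 : P0 E α m) (hroot : Rooted E α)
    {r : ℕ → ℕ}
    (hr : ∀ i : ℕ, 1 ≤ i → ∀ x ∈ descN E i α, (inSet E x).ncard = r i)
    (hf : ∀ x y : desc E u, (E x.1 y.1 ↔ E (f x) (f y)))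
    (hfu : f ⟨u, self_mem_desc E u⟩ = α) {k : ℕ} (hk : 1 ≤ k)
    (x : desc E u) (hx : x.1 ∈ descN E k u) :
    (desc E u ∩ inSet E x.1).ncard = r k := by
  classical
  have hfx : f x ∈ descN E k α := (rootIso_level hf hfu x).1 hx
  set F : V → V := fun z => if h : z ∈ desc E u then f ⟨z, h⟩ else z with hF
  have himg : F '' (desc E u ∩ inSet E x.1) = inSet E (f x) := by
    ext w
    constructor
    · rintro ⟨z, ⟨hzu, hzx⟩, rfl⟩
      rw [hF]; simp only [dif_pos hzu]
      exact (hf ⟨z, hzu⟩ x).1 hzx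
    · intro hw
      refine ⟨(f.symm w).1, ⟨(f.symm w).2, ?_⟩, ?_⟩
      · have := (hf (f.symm w) x).2
        rw [f.apply_symm_apply] at this
        exact this hw
      · rw [hF]; simp only [dif_pos (f.symm w).2]
        have : (⟨(f.symm w).1, (f.symm w).2⟩ : desc E u) = f.symm w := rfl
        rw [this, f.apply_symm_apply]
  have hinj : Set.InjOn F (desc E u ∩ inSet E x.1) := by
    intro a ha b hb hab
    rw [hF] at hab; simp only [dif_pos ha.1, dif_pos hb.1] at hab
    exact congrArg Subtype.val (f.injective hab)
  rw [← hr k hk (f x) hfx, ← himg, Set.ncard_image_of_injOn hinj]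

end RootIso

theorem r_mono_succ (h0 : P0 E α m) (hroot : Rooted E α) (h1 : P1 E)
    {r : ℕ → ℕ}
    (hr : ∀ i : ℕ, 1 ≤ i → ∀ x ∈ descN E i α, (inSet E x).ncard = r i)
    {k : ℕ} (hk : 1 ≤ k) : r k ≤ r (k+1) := by
  obtain ⟨u, hu⟩ := level_nonempty h0 1
  obtain ⟨f, hf, hfu⟩ := exists_rootIso h0 hroot h1 u
  -- local level k of u is nonempty
  have hcard := rootIso_level_card h0 hf hfu (n := k)
  have hpos : 0 < (descN E k u).ncard := by rw [hcard]; exact level_ncard_pos h0 k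
  obtain ⟨x, hx⟩ := Set.nonempty_of_ncard_ne_zero (s := descN E k u) (by omega)
  have hxu : x ∈ desc E u := ⟨k, hx⟩
  have h1' := rootIso_inval h0 hroot hr hf hfu hk ⟨x, hxu⟩ hx
  -- x is at global level k+1
  have hxlev : x ∈ descN E (k+1) α := by
    have : x ∈ descN E (1+k) α := arc_level hu hx
    rwa [Nat.add_comm] at this
  have h2' : (inSet E x).ncard = r (k+1) := hr (k+1) (by omega) x hxlev
  rw [← h1', ← h2']
  exact Set.ncard_le_ncard Set.inter_subset_right (inSet_finite h0 hroot hxlev)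

theorem r_mono (h0 : P0 E α m) (hroot : Rooted E α) (h1 : P1 E)
    {r : ℕ → ℕ}
    (hr : ∀ i : ℕ, 1 ≤ i → ∀ x ∈ descN E i α, (inSet E x).ncard = r i)
    {i j : ℕ} (hi : 1 ≤ i) (hij : i ≤ j) : r i ≤ r j := by
  induction j with
  | zero => omega
  | succ n ih =>
    rcases Nat.lt_or_ge i (n+1) with h | h
    · have h1n : 1 ≤ n := by omega
      exact le_trans (ih (by omega)) (r_mono_succ h0 hroot h1 hr h1n)
    · have : i = n + 1 := by omega
      rw [this]

end PQ
namespace PQ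

variable {V : Type*} {E : V → V → Prop} {α : V} {m : ℕ}

/-- the set of level-1 ancestors of `z`, at arc-distance `n` (so `z ∈ D_{n+1}`). -/
def Uset (E : V → V → Prop) (α : V) (n : ℕ) (z : V) : Set V :=
  {w | w ∈ descN E 1 α ∧ arcOf E n w z}

theorem Uset_subset (n : ℕ) (z : V) : Uset E α n z ⊆ descN E 1 α := fun _ h => h.1

theorem Uset_finite (h0 : P0 E α m) (n : ℕ) (z : V) : (Uset E α n z).Finite :=
  (level_finite h0 1).subset (Uset_subset n z)

theorem Uset_nonempty {n : ℕ} {z : V} (hz : z ∈ descN E (n+1) α) :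
    (Uset E α n z).Nonempty := by
  have hz' : arcOf E (1+n) α z := by rwa [Nat.add_comm] at hz
  obtain ⟨w, h1, h2⟩ := arcOf_split hz'
  exact ⟨w, h1, h2⟩

theorem mem_Uset_iff {n : ℕ} {w z : V} (hw : w ∈ descN E 1 α) :
    w ∈ Uset E α n z ↔ arcOf E n w z := ⟨fun h => h.2, fun h => ⟨hw, h⟩⟩

theorem r_one (h0 : P0 E α m) (hroot : Rooted E α)
    {r : ℕ → ℕ}
    (hr : ∀ i : ℕ, 1 ≤ i → ∀ x ∈ descN E i α, (inSet E x).ncard = r i) :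
    r 1 = 1 := by
  obtain ⟨y, hy⟩ := level_nonempty h0 1
  rw [← hr 1 (by omega) y hy]
  have hsub : inSet E y ⊆ {α} := by
    have := inSet_subset_level h0 hroot (s := 0) hy
    rwa [descN_zero] at this
  have hmem : α ∈ inSet E y := arcOf_one.1 hy
  have : inSet E y = {α} := Set.eq_of_subset_of_subset hsub (by simpa using hmem)
  rw [this, Set.ncard_singleton]

theorem level_one_card (h0 : P0 E α m) (hroot : Rooted E α)
    {r : ℕ → ℕ}
    (hr : ∀ i : ℕ, 1 ≤ i → ∀ x ∈ descN E i α, (inSet E x).ncard = r i) :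
    (descN E 1 α).ncard = m := by
  have := level_count h0 hroot hr 0
  rw [r_one h0 hroot hr, descN_zero] at this
  simpa using this

/-- `|Uset n z| = r (n+1)` for `z` at level `n+1` -/
theorem Uset_card (h0 : P0 E α m) (hroot : Rooted E α) (h1 : P1 E) (h2 : P2 E α)
    {r : ℕ → ℕ}
    (hr : ∀ i : ℕ, 1 ≤ i → ∀ x ∈ descN E i α, (inSet E x).ncard = r i)
    {n : ℕ} {z : V} (hz : z ∈ descN E (n+1) α) :
    (Uset E α n z).ncard = r (n+1) := by
  classical
  -- step 1: all Usets at this level have the same cardinality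
  have hconst : ∀ z' ∈ descN E (n+1) α,
      (Uset E α n z').ncard = (Uset E α n z).ncard := by
    intro z' hz'
    obtain ⟨g, hg, hgα, hgz⟩ := h2 (n+1) z' hz' z hz
    have himg : g '' Uset E α n z' = Uset E α n z := by
      ext w
      constructor
      · rintro ⟨v, ⟨hv1, hv2⟩, rfl⟩
        refine ⟨(aut_mem_level hg hgα).1 hv1, ?_⟩
        rw [← hgz]
        exact (aut_arcOf hg).1 hv2
      · rintro ⟨hw1, hw2⟩
        refine ⟨g.symm w, ⟨?_, ?_⟩, g.apply_symm_apply w⟩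
        · have := (aut_mem_level hg hgα (n := 1) (y := g.symm w)).2
          rw [g.apply_symm_apply] at this
          exact this hw1
        · have := (aut_arcOf hg (n := n) (x := g.symm w) (y := g.symm z)).2
          rw [g.apply_symm_apply, g.apply_symm_apply] at this
          have hzz : g.symm z = z' := by
            rw [← hgz, g.symm_apply_apply]
          rw [hzz] at this
          exact this hw2
    rw [← himg, Set.ncard_image_of_injective _ g.injective]
  -- step 2: double counting
  have hA := level_finite h0 1
  have hB := level_finite h0 (n+1)
  set A := hA.toFinset with hAdef
  set B := hB.toFinset with hBdef
  have key : ∑ w ∈ A, (B.filter (fun y => arcOf E n w y)).card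
      = ∑ y ∈ B, (A.filter (fun w => arcOf E n w y)).card := by
    simp_rw [Finset.card_filter]
    exact Finset.sum_comm
  have hrow : ∀ w ∈ A, (B.filter (fun y => arcOf E n w y)).card
      = (descN E n α).ncard := by
    intro w hw
    have hw' : w ∈ descN E 1 α := by rwa [hAdef, Set.Finite.mem_toFinset] at hw
    have hfinw : (descN E n w).Finite := by
      apply (level_finite h0 (n+1)).subset
      intro y hy
      have : y ∈ descN E (1+n) α := arc_level hw' hy
      rwa [Nat.add_comm] at this
    have heq : B.filter (fun y => arcOf E n w y) = hfinw.toFinset := by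
      ext y
      simp only [Finset.mem_filter, hBdef, Set.Finite.mem_toFinset]
      constructor
      · rintro ⟨_, h⟩; exact h
      · intro h
        refine ⟨?_, h⟩
        have : y ∈ descN E (1+n) α := arc_level hw' h
        rwa [Nat.add_comm] at this
    rw [heq, ← ncard_eq_finite_toFinset_card]
    obtain ⟨f, hf, hfu⟩ := exists_rootIso h0 hroot h1 w
    exact rootIso_level_card h0 hf hfu n
  have hcol : ∀ y ∈ B, (A.filter (fun w => arcOf E n w y)).card
      = (Uset E α n z).ncard := by
    intro y hy
    have hy' : y ∈ descN E (n+1) α := by rwa [hBdef, Set.Finite.mem_toFinset] at hy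
    have hfiny := Uset_finite h0 (α := α) n y
    have heq : A.filter (fun w => arcOf E n w y) = hfiny.toFinset := by
      ext w
      simp only [Finset.mem_filter, hAdef, Set.Finite.mem_toFinset]
      exact ⟨fun ⟨a, b⟩ => ⟨a, b⟩, fun ⟨a, b⟩ => ⟨a, b⟩⟩
    rw [heq, ← ncard_eq_finite_toFinset_card]
    exact hconst y hy'
  rw [Finset.sum_congr rfl hrow, Finset.sum_congr rfl hcol] at key
  simp only [Finset.sum_const, smul_eq_mul] at key
  -- key : A.card * d_n = B.card * |Uset n z|
  have hAcard : A.card = (descN E 1 α).ncard := by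
    rw [hAdef, ← ncard_eq_finite_toFinset_card]
  have hBcard : B.card = (descN E (n+1) α).ncard := by
    rw [hBdef, ← ncard_eq_finite_toFinset_card]
  rw [hAcard, hBcard, level_one_card h0 hroot hr] at key
  -- key : m * d_n = d_{n+1} * c
  have hlc := level_count h0 hroot hr n
  -- d_{n+1} * r_{n+1} = d_n * m
  have : (descN E (n+1) α).ncard * (Uset E α n z).ncard
      = (descN E (n+1) α).ncard * r (n+1) := by
    calc (descN E (n+1) α).ncard * (Uset E α n z).ncard
        = m * (descN E n α).ncard := key.symm
      _ = (descN E (n+1) α).ncard * r (n+1) := by rw [hlc, Nat.mul_comm]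
  exact (Nat.eq_of_mul_eq_mul_left (level_ncard_pos h0 (n+1)) this)

end PQ
namespace PQ

variable {V : Type*} {E : V → V → Prop} {α : V} {m : ℕ}

theorem Uset_mono_edge {n : ℕ} {z z' : V} (h : E z z') :
    Uset E α n z ⊆ Uset E α (n+1) z' := by
  rintro w ⟨hw1, hw2⟩
  exact ⟨hw1, arcOf_append hw2 (arcOf_one.2 h)⟩

section Deep

variable {r : ℕ → ℕ} {N : ℕ}

/-- along an edge at levels `≥ N`, the level-1 ancestor sets coincide -/
theorem Uset_eq_edge (h0 : P0 E α m) (hroot : Rooted E α) (h1 : P1 E) (h2 : P2 E α)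
    (hr : ∀ i : ℕ, 1 ≤ i → ∀ x ∈ descN E i α, (inSet E x).ncard = r i)
    (hNconst : ∀ j : ℕ, N ≤ j → r j = r N)
    {n : ℕ} {z z' : V} (hz : z ∈ descN E (n+1) α) (hN : N ≤ n+1) (h : E z z') :
    Uset E α n z = Uset E α (n+1) z' := by
  have hz' : z' ∈ descN E (n+2) α := edge_level hz h
  have hc1 : (Uset E α n z).ncard = r N := by
    rw [Uset_card h0 hroot h1 h2 hr hz]; exact hNconst (n+1) hN
  have hc2 : (Uset E α (n+1) z').ncard = r N := by
    rw [Uset_card h0 hroot h1 h2 hr hz']; exact hNconst (n+2) (by omega)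
  refine Set.eq_of_subset_of_ncard_le (Uset_mono_edge h) ?_ (Uset_finite h0 (n+1) z')
  rw [hc1, hc2]

/-- `Uset` is constant along directed paths starting at levels `≥ N` -/
theorem Uset_eq_path (h0 : P0 E α m) (hroot : Rooted E α) (h1 : P1 E) (h2 : P2 E α)
    (hr : ∀ i : ℕ, 1 ≤ i → ∀ x ∈ descN E i α, (inSet E x).ncard = r i)
    (hNconst : ∀ j : ℕ, N ≤ j → r j = r N) :
    ∀ (k : ℕ) {n : ℕ} {z z'' : V}, z ∈ descN E (n+1) α → N ≤ n+1 →
      arcOf E k z z'' → Uset E α n z = Uset E α (n+k) z'' := by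
  intro k
  induction k with
  | zero =>
    intro n z z'' hz hN harc
    rw [arcOf_zero] at harc
    subst harc
    rfl
  | succ j ih =>
    intro n z z'' hz hN harc
    obtain ⟨w, hw, harc'⟩ := harc
    have h1' : Uset E α n z = Uset E α (n+1) w :=
      Uset_eq_edge h0 hroot h1 h2 hr hNconst hz hN hw
    have h2' : Uset E α (n+1) w = Uset E α ((n+1)+j) z'' :=
      ih (n := n+1) (edge_level hz hw) (by omega) harc'
    have hidx : (n+1)+j = n+(j+1) := by omega
    rw [h1', h2', hidx]

/-- two level-`N` vertices with a common descendant have the same ancestor set -/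
theorem Uset_eq_of_common_desc (h0 : P0 E α m) (hroot : Rooted E α)
    (h1 : P1 E) (h2 : P2 E α)
    (hr : ∀ i : ℕ, 1 ≤ i → ∀ x ∈ descN E i α, (inSet E x).ncard = r i)
    (hNconst : ∀ j : ℕ, N ≤ j → r j = r N)
    {M : ℕ} (hM : N ≤ M + 1) {y y' : V}
    (hy : y ∈ descN E (M+1) α) (hy' : y' ∈ descN E (M+1) α)
    (hco : (desc E y ∩ desc E y').Nonempty) :
    Uset E α M y = Uset E α M y' := by
  obtain ⟨z, ⟨k, hk⟩, ⟨k', hk'⟩⟩ := hco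
  have hlev : z ∈ descN E ((M+1)+k) α := arc_level hy hk
  have hlev' : z ∈ descN E ((M+1)+k') α := arc_level hy' hk'
  have hkk : k = k' := by
    have := level_unique h0 hlev hlev'
    omega
  subst hkk
  rw [Uset_eq_path h0 hroot h1 h2 hr hNconst k hy hM hk,
    Uset_eq_path h0 hroot h1 h2 hr hNconst k hy' hM hk']

/-- KEY: it cannot be that any two level-`N` vertices with a common level-1
ancestor have equal ancestor sets (else `δ_{N-1}` would be non-trivial). -/
theorem key_not_H (h0 : P0 E α m) (hroot : Rooted E α) (h1 : P1 E)
    (h2 : P2 E α)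
    (hr : ∀ i : ℕ, 1 ≤ i → ∀ x ∈ descN E i α, (inSet E x).ncard = r i)
    {M : ℕ}
    (hdelta : ∀ u v : V, descN E M u = descN E M v → u = v)
    (ht2 : 2 ≤ r (M+1)) :
    ¬ (∀ y ∈ descN E (M+1) α, ∀ y' ∈ descN E (M+1) α,
        (Uset E α M y ∩ Uset E α M y').Nonempty → Uset E α M y = Uset E α M y') := by
  intro H
  -- pick u in level 1 and y0 ∈ Γ^M(u)
  obtain ⟨u, hu⟩ := level_nonempty h0 1
  obtain ⟨f, hf, hfu⟩ := exists_rootIso h0 hroot h1 u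
  have hpos : 0 < (descN E M u).ncard := by
    rw [rootIso_level_card h0 hf hfu M]; exact level_ncard_pos h0 M
  obtain ⟨y0, hy0⟩ := Set.nonempty_of_ncard_ne_zero (s := descN E M u) (by omega)
  have hy0lev : y0 ∈ descN E (M+1) α := by
    have : y0 ∈ descN E (1+M) α := arc_level hu hy0
    rwa [Nat.add_comm] at this
  have huS : u ∈ Uset E α M y0 := ⟨hu, hy0⟩
  have hScard : 1 < (Uset E α M y0).ncard := by
    rw [Uset_card h0 hroot h1 h2 hr hy0lev]; omega
  obtain ⟨v, hvS, hvu⟩ := Set.exists_ne_of_one_lt_ncard hScard u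
  have hv1 : v ∈ descN E 1 α := hvS.1
  -- show descN E M u = descN E M v
  have heq : descN E M u = descN E M v := by
    ext y
    constructor
    · intro hy
      have hylev : y ∈ descN E (M+1) α := by
        have : y ∈ descN E (1+M) α := arc_level hu hy
        rwa [Nat.add_comm] at this
      have := H y hylev y0 hy0lev ⟨u, ⟨hu, hy⟩, huS⟩
      have hvy : v ∈ Uset E α M y := by rw [this]; exact hvS
      exact hvy.2
    · intro hy
      have hylev : y ∈ descN E (M+1) α := by
        have : y ∈ descN E (1+M) α := arc_level hv1 hy
        rwa [Nat.add_comm] at this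
      have := H y hylev y0 hy0lev ⟨v, ⟨hv1, hy⟩, hvS⟩
      have huy : u ∈ Uset E α M y := by rw [this]; exact huS
      exact huy.2
  exact hvu (hdelta u v heq).symm

end Deep

end PQ
namespace PQ

variable {V : Type*} {E : V → V → Prop} {α : V} {m : ℕ}

/-- co-occurrence within a set `S`: both in `S` with intersecting descendant sets -/
def cooc (E : V → V → Prop) (S : Set V) (x y : V) : Prop :=
  x ∈ S ∧ y ∈ S ∧ (desc E x ∩ desc E y).Nonempty

theorem cooc_symm {S : Set V} : Symmetric (cooc E S) := by
  rintro x y ⟨h1, h2, z, hz1, hz2⟩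
  exact ⟨h2, h1, z, hz2, hz1⟩

/-- chains of co-occurrences within `S` -/
def chain (E : V → V → Prop) (S : Set V) : V → V → Prop :=
  Relation.ReflTransGen (cooc E S)

theorem chain_symm {S : Set V} {x y : V} (h : chain E S x y) : chain E S y x :=
  @Std.Symm.symm _ _ (@Relation.ReflTransGen.stdSymm _ (cooc E S) ⟨fun a b hab => cooc_symm hab⟩) _ _ h

theorem chain_trans {S : Set V} {x y z : V} (h1 : chain E S x y) (h2 : chain E S y z) :
    chain E S x z := Relation.ReflTransGen.trans h1 h2

/-- all of level 1 chained -/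
def Conn1 (E : V → V → Prop) (α : V) : Prop :=
  ∀ x ∈ descN E 1 α, ∀ y ∈ descN E 1 α, chain E (descN E 1 α) x y

/-- if all of level 1 is chained, then for any vertex `x`, any two out-neighbours
of `x` are chained within any superset of `outSet E x`. -/
theorem conn_children (h0 : P0 E α m) (hroot : Rooted E α) (h1 : P1 E)
    (hc : Conn1 E α) {n : ℕ} {x : V} (hx : x ∈ descN E n α)
    {y y' : V} (hy : E x y) (hy' : E x y') :
    chain E (descN E (n+1) α) y y' := by
  obtain ⟨f, hf, hfu⟩ := exists_rootIso h0 hroot h1 x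
  have hyd : y ∈ desc E x := desc_out_closed (self_mem_desc E x) hy
  have hy'd : y' ∈ desc E x := desc_out_closed (self_mem_desc E x) hy'
  have hylev : (⟨y, hyd⟩ : desc E x).1 ∈ descN E 1 x := arcOf_one.2 hy
  have hy'lev : (⟨y', hy'd⟩ : desc E x).1 ∈ descN E 1 x := arcOf_one.2 hy'
  have ha : f ⟨y, hyd⟩ ∈ descN E 1 α := (rootIso_level hf hfu _).1 hylev
  have hb : f ⟨y', hy'd⟩ ∈ descN E 1 α := (rootIso_level hf hfu _).1 hy'lev
  have hch := hc _ ha _ hb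
  -- map the chain back through f.symm
  have hstep : ∀ w w' : V, cooc E (descN E 1 α) w w' →
      cooc E (descN E (n+1) α) (f.symm w).1 (f.symm w').1 := by
    rintro w w' ⟨hw, hw', ζ, ⟨a, hζ1⟩, ⟨b, hζ2⟩⟩
    have hlev : ∀ v (hv : v ∈ descN E 1 α), (f.symm v).1 ∈ descN E (n+1) α := by
      intro v hv
      have : (f.symm v).1 ∈ descN E 1 x := by
        apply (rootIso_level hf hfu (n := 1) (f.symm v)).2
        rwa [f.apply_symm_apply]
      have := arc_level hx this
      exact this
    refine ⟨hlev w hw, hlev w' hw', (f.symm ζ).1, ⟨a, ?_⟩, ⟨b, ?_⟩⟩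
    · have := (sub_arc_transport f hf (n := a) (f.symm w) (f.symm ζ)).2
      rw [f.apply_symm_apply, f.apply_symm_apply] at this
      exact this hζ1
    · have := (sub_arc_transport f hf (n := b) (f.symm w') (f.symm ζ)).2
      rw [f.apply_symm_apply, f.apply_symm_apply] at this
      exact this hζ2
  have hlift : chain E (descN E (n+1) α) (f.symm (f ⟨y, hyd⟩)).1 (f.symm (f ⟨y', hy'd⟩)).1 :=
    Relation.ReflTransGen.lift (fun v => (f.symm v).1)
    (fun a b hab => hstep a b hab) _ _ hch
  have e1 : (f.symm (f ⟨y, hyd⟩)).1 = y := by rw [f.symm_apply_apply]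
  have e2 : (f.symm (f ⟨y', hy'd⟩)).1 = y' := by rw [f.symm_apply_apply]
  simpa only [e1, e2] using hlift

/-- bridging: if `x, x'` at level `n` co-occur, their children are chained -/
theorem conn_bridge (h0 : P0 E α m) (hroot : Rooted E α) (h1 : P1 E)
    (hc : Conn1 E α) {n : ℕ} {x x' : V} (hx : x ∈ descN E n α) (hx' : x' ∈ descN E n α)
    (hco : (desc E x ∩ desc E x').Nonempty)
    {y y' : V} (hy : E x y) (hy' : E x' y') :
    chain E (descN E (n+1) α) y y' := by
  obtain ⟨z, ⟨k, hk⟩, ⟨k', hk'⟩⟩ := hco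
  have hkk : k = k' := by
    have h1' := arc_level hx hk
    have h2' := arc_level hx' hk'
    have := level_unique h0 h1' h2'
    omega
  subst hkk
  match k, hk, hk' with
  | 0, hk, hk' =>
    rw [arcOf_zero] at hk hk'
    have hxx : x = x' := hk.trans hk'.symm
    subst hxx
    exact conn_children h0 hroot h1 hc hx hy hy'
  | (j+1), hk, hk' =>
    obtain ⟨w, hw, hwz⟩ := hk
    obtain ⟨w', hw', hwz'⟩ := hk'
    have hwl : w ∈ descN E (n+1) α := edge_level hx hw
    have hw'l : w' ∈ descN E (n+1) α := edge_level hx' hw'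
    have hmid : cooc E (descN E (n+1) α) w w' :=
      ⟨hwl, hw'l, z, ⟨j, hwz⟩, ⟨j, hwz'⟩⟩
    have c1 : chain E (descN E (n+1) α) y w := conn_children h0 hroot h1 hc hx hy hw
    have c2 : chain E (descN E (n+1) α) w' y' := conn_children h0 hroot h1 hc hx' hw' hy'
    exact chain_trans (chain_trans c1 (Relation.ReflTransGen.single hmid)) c2

/-- chains propagate down one level -/
theorem conn_step (h0 : P0 E α m) (hroot : Rooted E α) (h1 : P1 E)
    (hc : Conn1 E α) {n : ℕ} {x x' : V} (hx : x ∈ descN E n α)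
    (hch : chain E (descN E n α) x x') :
    ∀ {y y' : V}, E x y → E x' y' → chain E (descN E (n+1) α) y y' := by
  induction hch with
  | refl =>
    intro y y' hy hy'
    exact conn_children h0 hroot h1 hc hx hy hy'
  | @tail b c hab hbc ih =>
    intro y y' hy hy'
    obtain ⟨yb, hyb⟩ := outSet_nonempty h0 b
    have c1 : chain E (descN E (n+1) α) y yb := ih hy hyb
    have c2 : chain E (descN E (n+1) α) yb y' :=
      conn_bridge h0 hroot h1 hc hbc.1 hbc.2.1 hbc.2.2 hyb hy'
    exact chain_trans c1 c2

/-- if level 1 is all chained then every level is all chained -/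
theorem conn_all (h0 : P0 E α m) (hroot : Rooted E α) (h1 : P1 E)
    (hc : Conn1 E α) :
    ∀ n, 1 ≤ n → ∀ x ∈ descN E n α, ∀ y ∈ descN E n α, chain E (descN E n α) x y := by
  intro n
  induction n with
  | zero => omega
  | succ k ih =>
    intro _ y hy y' hy'
    by_cases hk : k = 0
    · subst hk; exact hc y hy y' hy'
    · obtain ⟨x, hx, hxy⟩ := has_parent hy
      obtain ⟨x', hx', hxy'⟩ := has_parent hy'
      have hch := ih (by omega) x hx x' hx'
      exact conn_step h0 hroot h1 hc hx hch hxy hxy'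

end PQ
namespace PQ

variable {V : Type*} {E : V → V → Prop} {α : V} {m : ℕ}

section NotConn

variable {r : ℕ → ℕ} {N : ℕ}

theorem chain_Uset (h0 : P0 E α m) (hroot : Rooted E α) (h1 : P1 E) (h2 : P2 E α)
    (hr : ∀ i : ℕ, 1 ≤ i → ∀ x ∈ descN E i α, (inSet E x).ncard = r i)
    (hNconst : ∀ j : ℕ, N ≤ j → r j = r N)
    {M : ℕ} (hM : N ≤ M + 1) {y y' : V} (hy : y ∈ descN E (M+1) α)
    (hch : chain E (descN E (M+1) α) y y') :
    Uset E α M y = Uset E α M y' := by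
  induction hch with
  | refl => rfl
  | @tail b c hab hbc ih =>
    rw [ih]
    exact Uset_eq_of_common_desc h0 hroot h1 h2 hr hNconst hM hbc.1 hbc.2.1 hbc.2.2

theorem not_conn1 (h0 : P0 E α m) (hroot : Rooted E α) (h1 : P1 E) (h2 : P2 E α)
    (hr : ∀ i : ℕ, 1 ≤ i → ∀ x ∈ descN E i α, (inSet E x).ncard = r i)
    (hNconst : ∀ j : ℕ, N ≤ j → r j = r N)
    {M : ℕ} (hM : N ≤ M + 1)
    (hdelta : ∀ u v : V, descN E M u = descN E M v → u = v)
    (ht2 : 2 ≤ r (M+1)) :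
    ¬ Conn1 E α := by
  intro hc
  have hnH := key_not_H h0 hroot h1 h2 hr hdelta ht2
  push_neg at hnH
  obtain ⟨y, hy, y', hy', hint, hne⟩ := hnH
  have hchain := conn_all h0 hroot h1 hc (M+1) (by omega) y hy y' hy'
  exact hne (chain_Uset h0 hroot h1 h2 hr hNconst hM hy hchain)

end NotConn

/-! ### blocks -/

def blockOf (E : V → V → Prop) (α : V) (u : V) : Set V :=
  {v | v ∈ descN E 1 α ∧ chain E (descN E 1 α) u v}

def Blocks (E : V → V → Prop) (α : V) : Set (Set V) :=
  (blockOf E α) '' (descN E 1 α)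

theorem blockOf_subset (u : V) : blockOf E α u ⊆ descN E 1 α := fun _ h => h.1

theorem mem_blockOf_self {u : V} (hu : u ∈ descN E 1 α) : u ∈ blockOf E α u :=
  ⟨hu, Relation.ReflTransGen.refl⟩

theorem blockOf_eq_of_mem {u v : V} (hv : v ∈ blockOf E α u) :
    blockOf E α v = blockOf E α u := by
  ext w
  constructor
  · rintro ⟨hw, hchw⟩
    exact ⟨hw, chain_trans hv.2 hchw⟩
  · rintro ⟨hw, hchw⟩
    exact ⟨hw, chain_trans (chain_symm hv.2) hchw⟩

theorem blockOf_finite (h0 : P0 E α m) (u : V) : (blockOf E α u).Finite :=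
  (level_finite h0 1).subset (blockOf_subset u)

theorem sUnion_blocks : ⋃₀ (Blocks E α) = descN E 1 α := by
  apply Set.eq_of_subset_of_subset
  · rintro x ⟨C, ⟨u, hu, rfl⟩, hx⟩
    exact hx.1
  · intro x hx
    exact ⟨blockOf E α x, ⟨x, hx, rfl⟩, mem_blockOf_self hx⟩

theorem blocks_disjoint {C C' : Set V} (hC : C ∈ Blocks E α) (hC' : C' ∈ Blocks E α)
    (hne : C ≠ C') : Disjoint C C' := by
  obtain ⟨u, hu, rfl⟩ := hC
  obtain ⟨u', hu', rfl⟩ := hC'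
  rw [Set.disjoint_left]
  intro w hw hw'
  exact hne ((blockOf_eq_of_mem hw).symm.trans (blockOf_eq_of_mem hw'))

theorem blocks_descSet_disjoint {C C' : Set V} (hC : C ∈ Blocks E α) (hC' : C' ∈ Blocks E α)
    (hne : C ≠ C') : Disjoint (descSet E C) (descSet E C') := by
  obtain ⟨u, hu, rfl⟩ := hC
  obtain ⟨u', hu', rfl⟩ := hC'
  rw [Set.disjoint_left]
  rintro z hz hz'
  rw [descSet, Set.mem_iUnion₂] at hz hz'
  obtain ⟨x, hx, hzx⟩ := hz
  obtain ⟨x', hx', hzx'⟩ := hz'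
  have hco : cooc E (descN E 1 α) x x' := ⟨hx.1, hx'.1, z, hzx, hzx'⟩
  have : blockOf E α x = blockOf E α x' := by
    have hxx' : x' ∈ blockOf E α x := ⟨hx'.1, Relation.ReflTransGen.single hco⟩
    exact (blockOf_eq_of_mem hxx').symm
  apply hne
  rw [← blockOf_eq_of_mem hx, ← blockOf_eq_of_mem hx', this]

theorem isAut_symm {g : Equiv.Perm V} (hg : IsAut E g) : IsAut E g.symm := by
  intro x y
  have := hg (g.symm x) (g.symm y)
  rwa [g.apply_symm_apply, g.apply_symm_apply, Iff.comm] at this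

theorem aut_cooc {g : Equiv.Perm V} (hg : IsAut E g) (hgα : g α = α) {x y : V}
    (h : cooc E (descN E 1 α) x y) : cooc E (descN E 1 α) (g x) (g y) := by
  obtain ⟨hx, hy, z, hz1, hz2⟩ := h
  exact ⟨(aut_mem_level hg hgα).1 hx, (aut_mem_level hg hgα).1 hy,
    g z, (aut_mem_desc hg).1 hz1, (aut_mem_desc hg).1 hz2⟩

theorem aut_chain {g : Equiv.Perm V} (hg : IsAut E g) (hgα : g α = α) {x y : V}
    (h : chain E (descN E 1 α) x y) : chain E (descN E 1 α) (g x) (g y) :=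
  Relation.ReflTransGen.lift g (fun a b hab => aut_cooc hg hgα hab) _ _ h

theorem aut_blockOf {g : Equiv.Perm V} (hg : IsAut E g) (hgα : g α = α) (u : V) :
    g '' blockOf E α u = blockOf E α (g u) := by
  ext w
  constructor
  · rintro ⟨v, ⟨hv, hch⟩, rfl⟩
    exact ⟨(aut_mem_level hg hgα).1 hv, aut_chain hg hgα hch⟩
  · rintro ⟨hw, hch⟩
    refine ⟨g.symm w, ⟨?_, ?_⟩, g.apply_symm_apply w⟩
    · have := (aut_mem_level hg hgα (n := 1) (y := g.symm w)).2
      rw [g.apply_symm_apply] at this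
      exact this hw
    · have := aut_chain (isAut_symm hg) ((Equiv.symm_apply_eq g).2 hgα.symm) hch
      rwa [g.symm_apply_apply] at this

theorem aut_mem_blocks {g : Equiv.Perm V} (hg : IsAut E g) (hgα : g α = α)
    {C : Set V} (hC : C ∈ Blocks E α) : g '' C ∈ Blocks E α := by
  obtain ⟨u, hu, rfl⟩ := hC
  rw [aut_blockOf hg hgα]
  exact ⟨g u, (aut_mem_level hg hgα).1 hu, rfl⟩

/-- all blocks have the same size -/
theorem blockOf_card_const (h0 : P0 E α m) (h2 : P2 E α) {u v : V}
    (hu : u ∈ descN E 1 α) (hv : v ∈ descN E 1 α) :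
    (blockOf E α u).ncard = (blockOf E α v).ncard := by
  obtain ⟨g, hg, hgα, hgu⟩ := h2 1 u hu v hv
  rw [← hgu, ← aut_blockOf hg hgα, Set.ncard_image_of_injective _ g.injective]

/-- the counting identity `m = #Blocks * blocksize` -/
theorem blocks_count (h0 : P0 E α m) (hroot : Rooted E α) (h2 : P2 E α)
    {r : ℕ → ℕ}
    (hr : ∀ i : ℕ, 1 ≤ i → ∀ x ∈ descN E i α, (inSet E x).ncard = r i)
    {u0 : V} (hu0 : u0 ∈ descN E 1 α) :
    m = (Blocks E α).ncard * (blockOf E α u0).ncard := by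
  classical
  have hD1 := level_finite h0 1
  set A := hD1.toFinset with hAdef
  set P := A.image (blockOf E α) with hPdef
  have hfib := Finset.card_eq_sum_card_fiberwise
    (f := blockOf E α) (s := A) (t := P) (fun x hx => Finset.mem_image_of_mem _ hx)
  have hfibcard : ∀ C ∈ P, (A.filter (fun x => blockOf E α x = C)).card
      = (blockOf E α u0).ncard := by
    intro C hC
    obtain ⟨u, hu, rfl⟩ := Finset.mem_image.1 hC
    have hu' : u ∈ descN E 1 α := by rwa [hAdef, Set.Finite.mem_toFinset] at hu
    have heq : A.filter (fun x => blockOf E α x = blockOf E α u)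
        = (blockOf_finite h0 u).toFinset := by
      ext x
      simp only [Finset.mem_filter, hAdef, Set.Finite.mem_toFinset]
      constructor
      · rintro ⟨hx, hbx⟩
        rw [← hbx]
        exact mem_blockOf_self hx
      · intro hx
        exact ⟨hx.1, blockOf_eq_of_mem hx⟩
    rw [heq, ← ncard_eq_finite_toFinset_card]
    exact blockOf_card_const h0 h2 hu' hu0
  rw [Finset.sum_congr rfl hfibcard, Finset.sum_const, smul_eq_mul] at hfib
  have hAcard : A.card = m := by
    rw [hAdef, ← ncard_eq_finite_toFinset_card]
    exact level_one_card h0 hroot hr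
  have hPcard : P.card = (Blocks E α).ncard := by
    have : (Blocks E α) = ↑P := by
      rw [hPdef, Finset.coe_image, hAdef, Set.Finite.coe_toFinset]
      rfl
    rw [this, Set.ncard_coe_finset]
  rw [← hAcard, ← hPcard]
  exact hfib

end PQ
namespace PQ

variable {V : Type*} {E : V → V → Prop} {α : V} {m : ℕ}

theorem prod_r_dvd (h0 : P0 E α m) (hroot : Rooted E α)
    {r : ℕ → ℕ}
    (hr : ∀ i : ℕ, 1 ≤ i → ∀ x ∈ descN E i α, (inSet E x).ncard = r i)
    (n : ℕ) : (∏ i ∈ Finset.Icc 1 n, r i) ∣ m ^ n :=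
  ⟨(descN E n α).ncard, by rw [mul_comm]; exact (level_prod h0 hroot hr n).symm⟩

theorem tail_pow_dvd {r : ℕ → ℕ} {N : ℕ} (hN1 : 1 ≤ N)
    (hNconst : ∀ j : ℕ, N ≤ j → r j = r N) (k : ℕ) :
    (r N) ^ k ∣ ∏ i ∈ Finset.Icc 1 (N + k), r i := by
  have hsplit : (∏ i ∈ Finset.Ioc 0 N, r i) * (∏ i ∈ Finset.Ioc N (N+k), r i)
      = ∏ i ∈ Finset.Ioc 0 (N+k), r i :=
    Finset.prod_Ioc_consecutive _ (by omega) (by omega)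
  have htail : (∏ i ∈ Finset.Ioc N (N+k), r i) = (r N) ^ k := by
    rw [Finset.prod_congr rfl (fun i hi => hNconst i (le_of_lt (Finset.mem_Ioc.1 hi).1)),
      Finset.prod_const, Nat.card_Ioc]
    congr 1
    omega
  have hIcc : Finset.Icc 1 (N+k) = Finset.Ioc 0 (N+k) := by
    ext i; simp [Finset.mem_Icc, Finset.mem_Ioc]; omega
  rw [hIcc, ← hsplit, htail]
  exact dvd_mul_left _ _

theorem dvd_of_pow_dvd_pow {t m N : ℕ} (ht : t ≠ 0) (hm : m ≠ 0)
    (h : ∀ k, t ^ k ∣ m ^ (N + k)) : t ∣ m := by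
  rw [← Nat.factorization_le_iff_dvd ht hm]
  rw [Finsupp.le_def]
  intro ℓ
  by_contra hlt
  push_neg at hlt
  set a := t.factorization ℓ with ha
  set b := m.factorization ℓ with hb
  set k := N * b + 1 with hk
  have hdvd := h k
  have hle := (Nat.factorization_le_iff_dvd (pow_ne_zero k ht) (pow_ne_zero (N+k) hm)).2 hdvd
  rw [Finsupp.le_def] at hle
  have := hle ℓ
  rw [Nat.factorization_pow, Nat.factorization_pow] at this
  simp only [Finsupp.smul_apply, smul_eq_mul] at this
  rw [← ha, ← hb, hk] at this
  have h2 : (N*b+1)*(b+1) ≤ (N*b+1)*a := Nat.mul_le_mul_left _ (by omega)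
  have h3 : (N*b+1)*(b+1) ≤ (N + (N*b+1))*b := le_trans h2 this
  ring_nf at h3
  linarith

theorem divisor_of_pq {p q d : ℕ} (hp : p.Prime) (hq : q.Prime) (hd : d ∣ p * q) :
    d = 1 ∨ d = p ∨ d = q ∨ d = p * q := by
  by_cases hpd : p ∣ d
  · obtain ⟨e, rfl⟩ := hpd
    have hp0 : 0 < p := hp.pos
    have he : e ∣ q := by
      have := (mul_dvd_mul_iff_left (by omega : p ≠ 0)).1 hd
      exact this
    rcases (Nat.Prime.eq_one_or_self_of_dvd hq e he) with h | h
    · right; left; rw [h, mul_one]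
    · right; right; right; rw [h]
  · have hcop : Nat.Coprime d p := ((Nat.Prime.coprime_iff_not_dvd hp).2 hpd).symm
    have hdq : d ∣ q := Nat.Coprime.dvd_of_dvd_mul_left hcop hd
    rcases (Nat.Prime.eq_one_or_self_of_dvd hq d hdq) with h | h
    · left; exact h
    · right; right; left; exact h

end PQ
open PQ in
/-- out-valency `p·q`, `p < q` primes, not a tree, `δ_{N-1}` trivial. -/
theorem pq_block_system (E : V → V → Prop) (α : V) (p q m N : ℕ) (r : ℕ → ℕ)
    (hp : p.Prime) (hq : q.Prime) (hpq : p < q) (hm : m = p * q)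
    (hroot : Rooted E α) (h0 : P0 E α m) (h1 : P1 E) (h2 : P2 E α) (h3 : P3 E α)
    (hnottree : ¬ ∀ i : ℕ, 1 ≤ i → r i = 1)
    (hr : ∀ i : ℕ, 1 ≤ i → ∀ x ∈ descN E i α, (inSet E x).ncard = r i)
    (hN1 : 1 ≤ N) (hNconst : ∀ j : ℕ, N ≤ j → r j = r N)
    (hNmin : ∀ N' : ℕ, 1 ≤ N' → (∀ j : ℕ, N' ≤ j → r j = r N') → N ≤ N')
    (hdelta : ∀ u v : V, descN E (N - 1) u = descN E (N - 1) v → u = v) :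
    (∃ Ω : Set (Set V),
      (∀ ω ∈ Ω, ω.Nonempty) ∧
      (⋃₀ Ω = descN E 1 α) ∧
      (∀ ω ∈ Ω, ∀ ω' ∈ Ω, ω ≠ ω' → Disjoint ω ω') ∧
      (∀ g : Equiv.Perm V, IsAut E g → g α = α → ∀ ω ∈ Ω, (g '' ω) ∈ Ω) ∧
      Ω.ncard = p ∧
      (∀ ω ∈ Ω, ω.ncard = q) ∧
      (∀ ω ∈ Ω, ∀ ω' ∈ Ω, ω ≠ ω' → Disjoint (descSet E ω) (descSet E ω'))) ∧
    (∀ i : ℕ, 1 ≤ i → i ≤ N - 1 → r i = 1) ∧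
    (∀ i : ℕ, N ≤ i → r i = p) := by
  classical
  have hm0 : 0 < m := h0.1
  have hp2 : 2 ≤ p := hp.two_le
  have hq2 : 2 ≤ q := hq.two_le
  obtain ⟨M, rfl⟩ : ∃ M, N = M + 1 := ⟨N - 1, by omega⟩
  have hdelta' : ∀ u v : V, descN E M u = descN E M v → u = v := by
    intro u v h
    exact hdelta u v (by simpa using h)
  -- t := r (M+1) ≥ 2
  have ht2 : 2 ≤ r (M+1) := by
    by_contra hlt
    push_neg at hlt
    apply hnottree
    intro i hi
    have hpos := r_pos h0 hroot hr hi
    rcases le_or_gt i (M+1) with h | h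
    · have := r_mono h0 hroot h1 hr hi h
      omega
    · have := hNconst i (by omega)
      omega
  -- level 1 is not all chained
  have hnc : ¬ Conn1 E α :=
    not_conn1 h0 hroot h1 h2 hr hNconst (le_refl (M+1)) hdelta' ht2
  -- blocks
  obtain ⟨u0, hu0⟩ := level_nonempty h0 1
  have hcount : m = (Blocks E α).ncard * (blockOf E α u0).ncard :=
    blocks_count h0 hroot h2 hr hu0
  have hBfin : (Blocks E α).Finite := (level_finite h0 1).image _
  -- at least two blocks
  have hs2 : 2 ≤ (Blocks E α).ncard := by
    rw [Conn1] at hnc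
    push_neg at hnc
    obtain ⟨x, hx, y, hy, hnch⟩ := hnc
    have hne : blockOf E α x ≠ blockOf E α y := by
      intro he
      have : y ∈ blockOf E α x := he ▸ mem_blockOf_self hy
      exact hnch this.2
    have : 1 < (Blocks E α).ncard := by
      rw [Set.one_lt_ncard_iff hBfin]
      exact ⟨blockOf E α x, blockOf E α y, ⟨x, hx, rfl⟩, ⟨y, hy, rfl⟩, hne⟩
    omega
  -- t ≤ c
  have htc : r (M+1) ≤ (blockOf E α u0).ncard := by
    obtain ⟨y0, hy0⟩ := level_nonempty h0 (M+1)
    obtain ⟨u, huS⟩ := Uset_nonempty hy0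
    have hSsub : Uset E α M y0 ⊆ blockOf E α u := by
      intro v hv
      exact ⟨hv.1, Relation.ReflTransGen.single
        ⟨huS.1, hv.1, y0, ⟨M, huS.2⟩, ⟨M, hv.2⟩⟩⟩
    have h1' : r (M+1) ≤ (blockOf E α u).ncard := by
      rw [← Uset_card h0 hroot h1 h2 hr hy0]
      exact Set.ncard_le_ncard hSsub (blockOf_finite h0 u)
    rwa [blockOf_card_const h0 h2 huS.1 hu0] at h1'
  -- t ≠ c
  have htne : r (M+1) ≠ (blockOf E α u0).ncard := by
    intro he
    apply key_not_H h0 hroot h1 h2 hr hdelta' ht2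
    have aux : ∀ yy ∈ descN E (M+1) α, ∀ w ∈ Uset E α M yy,
        Uset E α M yy = blockOf E α w := by
      intro yy hyy w hw
      have hsub : Uset E α M yy ⊆ blockOf E α w := by
        intro v hv
        exact ⟨hv.1, Relation.ReflTransGen.single
          ⟨hw.1, hv.1, yy, ⟨M, hw.2⟩, ⟨M, hv.2⟩⟩⟩
      refine Set.eq_of_subset_of_ncard_le hsub ?_ (blockOf_finite h0 w)
      rw [Uset_card h0 hroot h1 h2 hr hyy, blockOf_card_const h0 h2 hw.1 hu0, ← he]
    intro y hy y' hy' hint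
    obtain ⟨w, hwy, hwy'⟩ := hint
    rw [aux y hy w hwy, aux y' hy' w hwy']
  -- divisibility facts
  have hpowdvd : ∀ k, r (M+1) ^ k ∣ m ^ ((M+1) + k) := fun k =>
    dvd_trans (tail_pow_dvd (by omega) hNconst k) (prod_r_dvd h0 hroot hr ((M+1)+k))
  have htm : r (M+1) ∣ m := dvd_of_pow_dvd_pow (by omega) (by omega) hpowdvd
  have htlt : r (M+1) < m := r_lt_m h0 hroot h3 hr (by omega)
  have hcdvd : (blockOf E α u0).ncard ∣ m :=
    ⟨(Blocks E α).ncard, by rw [hcount, mul_comm]⟩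
  have hc2 : 2 ≤ (blockOf E α u0).ncard := le_trans ht2 htc
  have hclt : (blockOf E α u0).ncard < m := by
    have h2c : 2 * (blockOf E α u0).ncard ≤ (Blocks E α).ncard * (blockOf E α u0).ncard :=
      Nat.mul_le_mul_right _ hs2
    rw [← hcount] at h2c
    omega
  have htltc : r (M+1) < (blockOf E α u0).ncard := lt_of_le_of_ne htc htne
  -- pin down t = p, c = q
  have hrNp : r (M+1) = p ∧ (blockOf E α u0).ncard = q := by
    rcases divisor_of_pq hp hq (hm ▸ htm) with h | h | h | h
    · omega
    all_goals rcases divisor_of_pq hp hq (hm ▸ hcdvd) with h' | h' | h' | h'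
    all_goals first
      | omega
      | (exact ⟨h, h'⟩)
      | (rw [hm] at htlt; omega)
      | (rw [hm] at hclt; omega)
  obtain ⟨hrNp, hcq⟩ := hrNp
  -- number of blocks = p
  have hsp : (Blocks E α).ncard = p := by
    have : (Blocks E α).ncard * q = p * q := by
      have hc' := hcount
      rw [hcq] at hc'
      rw [← hc']
      exact hm
    exact Nat.eq_of_mul_eq_mul_right (by omega) this
  -- part 2 : r i = 1 for 1 ≤ i ≤ M
  have hpart2 : ∀ i : ℕ, 1 ≤ i → i ≤ M → r i = 1 := by
    intro i hi hiM
    have hM1 : 1 ≤ M := le_trans hi hiM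
    have hrMlt : r M < r (M+1) := by
      have hle : r M ≤ r (M+1) := r_mono h0 hroot h1 hr hM1 (by omega)
      rcases eq_or_lt_of_le hle with he | hlt
      · exfalso
        have hconst : ∀ j, M ≤ j → r j = r M := by
          intro j hj
          rcases Nat.eq_or_lt_of_le hj with h | h
          · rw [← h]
          · rw [hNconst j (by omega), ← he]
        have := hNmin M hM1 hconst
        omega
      · exact hlt
    have hrM1 : r M = 1 := by
      by_contra hne1
      have h2' : 2 ≤ r M := by
        have := r_pos h0 hroot hr hM1
        omega
      obtain ⟨ℓ, hℓp, hℓd⟩ := Nat.exists_prime_and_dvd (by omega : r M ≠ 1)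
      have hdprod : r M ∣ ∏ j ∈ Finset.Icc 1 M, r j :=
        Finset.dvd_prod_of_mem _ (by simp [Finset.mem_Icc]; omega)
      have hℓm : ℓ ∣ m := hℓp.dvd_of_dvd_pow
        (dvd_trans (dvd_trans hℓd hdprod) (prod_r_dvd h0 hroot hr M))
      have hℓle : ℓ ≤ r M := Nat.le_of_dvd (by omega) hℓd
      rw [hm] at hℓm
      rcases (Nat.Prime.dvd_mul hℓp).1 hℓm with h | h
      · have := (Nat.prime_dvd_prime_iff_eq hℓp hp).1 h
        omega
      · have := (Nat.prime_dvd_prime_iff_eq hℓp hq).1 h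
        omega
    have hle := r_mono h0 hroot h1 hr hi hiM
    have := r_pos h0 hroot hr hi
    omega
  refine ⟨⟨Blocks E α, ?_, sUnion_blocks, ?_, ?_, ?_, ?_, ?_⟩, ?_, ?_⟩
  · rintro ω ⟨u, hu, rfl⟩
    exact ⟨u, mem_blockOf_self hu⟩
  · intro ω hω ω' hω' hne
    exact blocks_disjoint hω hω' hne
  · intro g hg hgα ω hω
    exact aut_mem_blocks hg hgα hω
  · exact hsp
  · rintro ω ⟨u, hu, rfl⟩
    rw [blockOf_card_const h0 h2 hu hu0]
    exact hcq
  · intro ω hω ω' hω' hne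
    exact blocks_descSet_disjoint hω hω' hne
  · intro i hi hiM
    exact hpart2 i hi (by omega)
  · intro i hi
    rw [hNconst i hi]
    exact hrNp
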